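/- Let S be a countable state space, 0 ≤ γ < 1, and suppose ω: S → ℝ satisfies the flow equation γ·∑_s p∞(s)·ω(s)·P(s'|s) + (1-γ)·ν(s') = p∞(s')·ω(s') for all s', where p∞(s) > 0 for all s. Then ω(s) = (1-γ)·∑_{t=0}^∞ γ^t p_t(s)/p∞(s), where p_0 = ν and p_{t+1}(s') = ∑_s p_t(s)P(s'|s). -/

import Mathlib

/-- Iterated pushforward of a signed measure (density) under the kernel `P`. -/
noncomputable def pushIter {S : Type*} (P : S → S → ℝ) (f : S → ℝ) : ℕ → S → ℝ
  | 0 => f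
  | (n + 1) => fun s' => ∑' s, pushIter P f n s * P s' s

/-- Uniqueness: any bounded solution of the Bellman-flow fixed point
equation equals the discounted visitation density ratio. -/
theorem stmt_6 {S : Type*} [Countable S]
    (γ : ℝ) (hγ0 : 0 ≤ γ) (hγ1 : γ < 1)
    (ν : S → ℝ) (hν : (∀ s, 0 ≤ ν s) ∧ ∑' s, ν s = 1)
    (P : S → S → ℝ) (hP : ∀ s, (∀ s', 0 ≤ P s' s) ∧ ∑' s', P s' s = 1)
    (p : ℕ → S → ℝ) (hp0 : p 0 = ν)
    (hflow : ∀ t s', p (t + 1) s' = ∑' s, p t s * P s' s)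
    (pinf : S → ℝ) (hpinf_pos : ∀ s, 0 < pinf s) (hpinf : ∑' s, pinf s = 1)
    (ω : S → ℝ) (hbdd : ∃ C, ∀ s, |ω s| ≤ C)
    (hfix : ∀ s', γ * (∑' s, pinf s * ω s * P s' s) + (1 - γ) * ν s'
              = pinf s' * ω s') :
    ∀ s, ω s = (1 - γ) * ∑' t : ℕ, γ ^ t * p t s / pinf s := by
  classical
  -- columns of P are summable
  have hPsum : ∀ s, Summable (fun s' => P s' s) := by
    intro s
    by_contra h
    have h2 := (hP s).2
    rw [tsum_eq_zero_of_not_summable h] at h2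
    norm_num at h2
  have hPle1 : ∀ s s', P s' s ≤ 1 := by
    intro s s'
    have := Summable.le_tsum (hPsum s) s' (fun j _ => (hP s).1 j)
    rwa [(hP s).2] at this
  -- single pushforward step preserves: nonneg, summable, total mass 1
  have hstep : ∀ f : S → ℝ, (∀ s, 0 ≤ f s) → Summable f → ∑' s, f s = 1 →
      (∀ s', 0 ≤ ∑' s, f s * P s' s) ∧ Summable (fun s' => ∑' s, f s * P s' s) ∧
        ∑' s', ∑' s, f s * P s' s = 1 := by
    intro f h0 hs h1
    have hnn : (0 : S × S → ℝ) ≤ fun q : S × S => f q.1 * P q.2 q.1 :=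
      fun q => mul_nonneg (h0 q.1) ((hP q.1).1 q.2)
    have hF : Summable (fun q : S × S => f q.1 * P q.2 q.1) := by
      rw [summable_prod_of_nonneg hnn]
      constructor
      · intro s; exact (hPsum s).mul_left (f s)
      · have heq : (fun s => ∑' s', f s * P s' s) = f := by
          funext s; rw [tsum_mul_left, (hP s).2, mul_one]
        simpa [heq] using hs
    have hcomm : ∑' (s' : S) (s : S), f s * P s' s = ∑' (s : S) (s' : S), f s * P s' s :=
      Summable.tsum_comm (f := fun s s' => f s * P s' s) hF
    refine ⟨fun s' => tsum_nonneg (fun s => mul_nonneg (h0 s) ((hP s).1 s')), ?_, ?_⟩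
    · have hnn' : (0 : S × S → ℝ) ≤ fun q : S × S => f q.2 * P q.1 q.2 :=
        fun q => mul_nonneg (h0 q.2) ((hP q.2).1 q.1)
      have hFs : Summable (fun q : S × S => f q.2 * P q.1 q.2) := hF.prod_symm
      exact ((summable_prod_of_nonneg hnn').mp hFs).2
    · rw [hcomm]
      have heq : (fun s => ∑' s', f s * P s' s) = f := by
        funext s; rw [tsum_mul_left, (hP s).2, mul_one]
      rw [show ∑' (s : S) (s' : S), f s * P s' s = ∑' s, f s from by rw [heq]]
      exact h1
  -- iterated pushforwards of a probability density are probability densities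
  have hgood : ∀ f : S → ℝ, (∀ s, 0 ≤ f s) → Summable f → ∑' s, f s = 1 →
      ∀ n, (∀ s, 0 ≤ pushIter P f n s) ∧ Summable (pushIter P f n) ∧
        ∑' s, pushIter P f n s = 1 := by
    intro f h0 hs h1 n
    induction n with
    | zero => exact ⟨h0, hs, h1⟩
    | succ n ih => exact hstep _ ih.1 ih.2.1 ih.2.2
  have hpt : ∀ g : S → ℝ, (∀ s, 0 ≤ g s) → Summable g → ∑' s, g s = 1 →
      ∀ s, g s ≤ 1 := by
    intro g h0 hs h1 s
    have := Summable.le_tsum hs s (fun j _ => h0 j)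
    rwa [h1] at this
  -- summability facts for ν and pinf
  have hνs : Summable ν := by
    by_contra h
    have h2 := hν.2
    rw [tsum_eq_zero_of_not_summable h] at h2
    norm_num at h2
  have hps : Summable pinf := by
    by_contra h
    have h2 := hpinf
    rw [tsum_eq_zero_of_not_summable h] at h2
    norm_num at h2
  have hq := hgood ν hν.1 hνs hν.2
  have hr := hgood pinf (fun s => (hpinf_pos s).le) hps hpinf
  -- p agrees with pushIter P ν
  have hpn : ∀ n, p n = pushIter P ν n := by
    intro n
    induction n with
    | zero => simpa [pushIter] using hp0
    | succ n ih => funext s'; rw [hflow n s', ih]; rfl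
  intro s0
  obtain ⟨C, hC⟩ := hbdd
  have hC0 : 0 ≤ C := le_trans (abs_nonneg _) (hC s0)
  set m : S → ℝ := fun s => pinf s * ω s with hm
  -- bound on the iterated pushforwards of m, with summability along the way
  have hmulP : ∀ g : S → ℝ, (∀ s, 0 ≤ g s) → Summable g →
      ∀ s', Summable (fun s => g s * P s' s) := by
    intro g h0 hs s'
    refine Summable.of_nonneg_of_le (fun s => mul_nonneg (h0 s) ((hP s).1 s'))
      (fun s => ?_) hs
    calc g s * P s' s ≤ g s * 1 := mul_le_mul_of_nonneg_left (hPle1 s s') (h0 s)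
      _ = g s := mul_one _
  have hbound : ∀ n s, |pushIter P m n s| ≤ C * pushIter P pinf n s := by
    intro n
    induction n with
    | zero =>
      intro s
      calc |pinf s * ω s| = pinf s * |ω s| := by
            rw [abs_mul, abs_of_pos (hpinf_pos s)]
        _ ≤ pinf s * C := mul_le_mul_of_nonneg_left (hC s) (hpinf_pos s).le
        _ = C * pinf s := mul_comm _ _
    | succ n ih =>
      intro s'
      have hrP : Summable (fun s => pushIter P pinf n s * P s' s) :=
        hmulP _ (hr n).1 (hr n).2.1 s'
      have hb : ∀ s, |pushIter P m n s * P s' s| ≤ C * (pushIter P pinf n s * P s' s) := by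
        intro s
        rw [abs_mul, abs_of_nonneg ((hP s).1 s'), ← mul_assoc]
        exact mul_le_mul_of_nonneg_right (ih s) ((hP s).1 s')
      have hsum : Summable (fun s => pushIter P m n s * P s' s) := by
        refine Summable.of_norm_bounded (hrP.mul_left C) (fun s => ?_)
        simpa only [Real.norm_eq_abs] using hb s
      calc |pushIter P m (n + 1) s'| = |∑' s, pushIter P m n s * P s' s| := rfl
        _ ≤ ∑' s, |pushIter P m n s * P s' s| := by
            have := norm_tsum_le_tsum_norm (f := fun s => pushIter P m n s * P s' s)
              (by simpa only [Real.norm_eq_abs] using hsum.abs)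
            simpa only [Real.norm_eq_abs] using this
        _ ≤ ∑' s, C * (pushIter P pinf n s * P s' s) :=
            Summable.tsum_le_tsum hb hsum.abs (hrP.mul_left C)
        _ = C * ∑' s, pushIter P pinf n s * P s' s := tsum_mul_left
        _ = C * pushIter P pinf (n + 1) s' := rfl
  -- the fixed-point equation iterates
  have hiter : ∀ n s', pushIter P m n s' =
      γ * pushIter P m (n + 1) s' + (1 - γ) * pushIter P ν n s' := by
    intro n
    induction n with
    | zero =>
      intro s'
      show m s' = γ * (∑' s, m s * P s' s) + (1 - γ) * ν s'
      exact (hfix s').symm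
    | succ n ih =>
      intro s'
      have h1 : Summable (fun s => pushIter P m (n + 1) s * P s' s) := by
        refine Summable.of_norm_bounded (((hr (n + 1)).2.1).mul_left C) (fun s => ?_)
        rw [Real.norm_eq_abs, abs_mul, abs_of_nonneg ((hP s).1 s')]
        calc |pushIter P m (n + 1) s| * P s' s
            ≤ (C * pushIter P pinf (n + 1) s) * 1 :=
              mul_le_mul (hbound (n + 1) s) (hPle1 s s') ((hP s).1 s')
                (mul_nonneg hC0 ((hr (n + 1)).1 s))
          _ = C * pushIter P pinf (n + 1) s := mul_one _
      have h2 : Summable (fun s => pushIter P ν n s * P s' s) :=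
        hmulP _ (hq n).1 (hq n).2.1 s'
      calc pushIter P m (n + 1) s' = ∑' s, pushIter P m n s * P s' s := rfl
        _ = ∑' s, (γ * (pushIter P m (n + 1) s * P s' s)
              + (1 - γ) * (pushIter P ν n s * P s' s)) := by
            congr 1; funext s; rw [ih s]; ring
        _ = γ * (∑' s, pushIter P m (n + 1) s * P s' s)
              + (1 - γ) * (∑' s, pushIter P ν n s * P s' s) := by
            rw [Summable.tsum_add (h1.mul_left γ) (h2.mul_left (1 - γ)), tsum_mul_left, tsum_mul_left]
        _ = γ * pushIter P m (n + 2) s' + (1 - γ) * pushIter P ν (n + 1) s' := rfl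
  have hqt : ∀ t, pushIter P ν t s0 = p t s0 := fun t => (congrFun (hpn t) s0).symm
  -- telescoping identity
  have htel : ∀ n, pinf s0 * ω s0 =
      (1 - γ) * (∑ t ∈ Finset.range n, γ ^ t * p t s0) + γ ^ n * pushIter P m n s0 := by
    intro n
    induction n with
    | zero => simp [pushIter, hm]
    | succ n ih =>
      rw [ih, hiter n s0, hqt n, Finset.sum_range_succ]; ring
  -- summability of the geometric series
  have hple1 : ∀ t, p t s0 ≤ 1 := by
    intro t
    rw [congrFun (hpn t) s0]
    exact hpt _ (hq t).1 (hq t).2.1 (hq t).2.2 s0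
  have hp0' : ∀ t, 0 ≤ p t s0 := by
    intro t; rw [congrFun (hpn t) s0]; exact (hq t).1 s0
  have hsum_geo : Summable (fun t : ℕ => γ ^ t * p t s0) := by
    refine Summable.of_nonneg_of_le (fun t => mul_nonneg (pow_nonneg hγ0 t) (hp0' t))
      (fun t => ?_) (summable_geometric_of_lt_one hγ0 hγ1)
    calc γ ^ t * p t s0 ≤ γ ^ t * 1 :=
          mul_le_mul_of_nonneg_left (hple1 t) (pow_nonneg hγ0 t)
      _ = γ ^ t := mul_one _
  -- limits
  have hA : Filter.Tendsto (fun n => ∑ t ∈ Finset.range n, γ ^ t * p t s0)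
      Filter.atTop (nhds (∑' t, γ ^ t * p t s0)) :=
    hsum_geo.hasSum.tendsto_sum_nat
  have hB : Filter.Tendsto (fun n => γ ^ n * pushIter P m n s0)
      Filter.atTop (nhds 0) := by
    apply squeeze_zero_norm (a := fun n => C * γ ^ n)
    · intro n
      rw [Real.norm_eq_abs, abs_mul, abs_pow, abs_of_nonneg hγ0]
      calc γ ^ n * |pushIter P m n s0| ≤ γ ^ n * (C * pushIter P pinf n s0) :=
            mul_le_mul_of_nonneg_left (hbound n s0) (pow_nonneg hγ0 n)
        _ ≤ γ ^ n * (C * 1) := by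
            refine mul_le_mul_of_nonneg_left ?_ (pow_nonneg hγ0 n)
            exact mul_le_mul_of_nonneg_left (hpt _ (hr n).1 (hr n).2.1 (hr n).2.2 s0) hC0
        _ = C * γ ^ n := by ring
    · have := (tendsto_pow_atTop_nhds_zero_of_lt_one hγ0 hγ1).const_mul C
      simpa using this
  have hlim : Filter.Tendsto
      (fun n => (1 - γ) * (∑ t ∈ Finset.range n, γ ^ t * p t s0)
        + γ ^ n * pushIter P m n s0)
      Filter.atTop (nhds ((1 - γ) * (∑' t, γ ^ t * p t s0) + 0)) :=
    (hA.const_mul (1 - γ)).add hB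
  have hlim' : Filter.Tendsto (fun _ : ℕ => pinf s0 * ω s0)
      Filter.atTop (nhds ((1 - γ) * (∑' t, γ ^ t * p t s0) + 0)) :=
    hlim.congr (fun n => (htel n).symm)
  have hveq : (1 - γ) * (∑' t, γ ^ t * p t s0) + 0 = pinf s0 * ω s0 :=
    tendsto_nhds_unique hlim' tendsto_const_nhds
  have hne : pinf s0 ≠ 0 := (hpinf_pos s0).ne'
  have hfin : ω s0 = (pinf s0 * ω s0) / pinf s0 := by field_simp
  rw [hfin, ← hveq, tsum_div_const]
  ring
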